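/- For every ordinal a, φ_{a+1}(0) = sup over natural numbers n of the n-fold iterate of φ_a applied to φ_a(0) + 1; that is, φ_{a+1}(0) = ⨆_{n ∈ ℕ} φ_a^[n](φ_a(0) + 1). -/

import Mathlib

noncomputable def veblen (o : Ordinal.{0}) : Ordinal.{0} → Ordinal.{0} :=
  if o = 0 then fun b => Ordinal.omega0 ^ b
  else Ordinal.derivFamily fun x : Set.Iio o => veblen x.1
termination_by o
decreasing_by exact x.2

theorem veblen_isNormal (a : Ordinal) : Order.IsNormal (veblen a) := by
  induction a using Ordinal.induction with
  | h a IH =>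
    rw [veblen]
    split
    · exact Ordinal.isNormal_opow Ordinal.one_lt_omega0
    · exact Ordinal.isNormal_derivFamily _

theorem veblen_fp {a' a : Ordinal} (h : a' < a) (b : Ordinal) :
    veblen a' (veblen a b) = veblen a b := by
  have ha : a ≠ 0 := fun e => by subst e; exact absurd h (not_lt_zero')
  rw [show veblen a = Ordinal.derivFamily (fun x : Set.Iio a => veblen x.1) from by
    rw [veblen, if_neg ha]]
  exact Ordinal.derivFamily_fp (f := fun x : Set.Iio a => veblen x.1) (i := ⟨a', h⟩)
    (veblen_isNormal a') b

theorem veblen_zero_pos (a : Ordinal) : 0 < veblen a 0 := by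
  rcases eq_or_ne a 0 with rfl | ha
  · rw [veblen, if_pos rfl]; exact Ordinal.opow_pos 0 Ordinal.omega0_pos
  · have := veblen_fp (pos_iff_ne_zero.2 ha) 0
    rw [show veblen 0 = fun b => Ordinal.omega0 ^ b from by rw [veblen]; simp] at this
    calc 0 < Ordinal.omega0 ^ (veblen a 0) := Ordinal.opow_pos _ Ordinal.omega0_pos
    _ = veblen a 0 := this

theorem veblen_succ_eq_nfp (a : Ordinal) :
    veblen (a + 1) 0 = Ordinal.nfp (veblen a) 0 := by
  have hne : a + 1 ≠ 0 := by rw [Ordinal.add_one_eq_succ]; exact Order.succ_ne_bot a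
  rw [veblen, if_neg hne, Ordinal.derivFamily_zero]
  apply le_antisymm
  · refine Ordinal.nfpFamily_le_fp (f := fun x : Set.Iio (a + 1) => veblen x.1)
      (fun i => (veblen_isNormal i.1).monotone) zero_le ?_
    intro ⟨a', h⟩
    rcases lt_or_eq_of_le (show a' ≤ a by
        rw [Ordinal.add_one_eq_succ] at h; exact Order.lt_succ_iff.mp h) with h' | rfl
    · calc veblen a' (Ordinal.nfp (veblen a) 0)
          = veblen a' (veblen a (Ordinal.nfp (veblen a) 0)) := by
            rw [Ordinal.nfp_fp (veblen_isNormal a)]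
        _ = veblen a (Ordinal.nfp (veblen a) 0) := veblen_fp h' _
        _ ≤ Ordinal.nfp (veblen a) 0 := le_of_eq (Ordinal.nfp_fp (veblen_isNormal a) 0)
    · exact le_of_eq (Ordinal.nfp_fp (veblen_isNormal _) 0)
  · apply Ordinal.nfp_le
    intro n
    have : (veblen a)^[n] 0 =
        List.foldr (fun x : Set.Iio (a + 1) => veblen x.1) 0
          (List.replicate n ⟨a, Order.lt_succ a⟩) := by
      induction n with
      | zero => simp
      | succ n ih => rw [Function.iterate_succ_apply', List.replicate_succ, List.foldr_cons, ih]
    rw [this]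
    exact Ordinal.foldr_le_nfpFamily _ _ _

theorem veblen_succ_apply_zero (a : Ordinal) :
    veblen (a + 1) 0 = ⨆ n : ℕ, (veblen a)^[n] (veblen a 0 + 1) := by
  have hN := veblen_isNormal a
  rw [veblen_succ_eq_nfp, ← Ordinal.iSup_iterate_eq_nfp]
  apply le_antisymm
  · refine Ordinal.iSup_le fun n => le_trans ?_ (Ordinal.le_iSup _ n)
    exact (hN.monotone.iterate n) zero_le
  · refine Ordinal.iSup_le fun n => le_trans ?_ (Ordinal.le_iSup (fun n => (veblen a)^[n] 0) (n + 2))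
    apply hN.monotone.iterate n
    show veblen a 0 + 1 ≤ veblen a (veblen a 0)
    rw [Ordinal.add_one_eq_succ, Order.succ_le_iff]
    exact hN.strictMono (veblen_zero_pos a)
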